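/- Suppose the differences {X_i − X_j : 1 ≤ i, j ≤ m} span ℝ^d (i.e. X₁,…,X_m are not coplanar) and let β be an interior point of the convex hull Δ_X of X₁,…,X_m. Then the equation ∇Z(t)/Z(t) = β has a unique solution t_β ∈ ℝ^d; under the constraints Σ p_j = 1, Σ p_j X_j = β, the entropy h(p) attains its maximum at the unique maximal point p* given by p*_j = e^{⟨t_β, X_j⟩}/Z(t_β) for j = 1,…,m; and the maximum value is h(p*) = log Z(t_β) − ⟨t_β, β⟩. -/

import Mathlib

open scoped BigOperators RealInnerProductSpace
open Filter Topology

set_option maxHeartbeats 1000000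

noncomputable section

/-- `Euc s` is the Euclidean space `ℝ^s`. -/
abbrev Euc (s : ℕ) := EuclideanSpace ℝ (Fin s)

/-- The additive semigroup `X₁ℕ + ⋯ + X_mℕ` generated by the vectors `X j`. -/
def sgOf {s : ℕ} {ι : Type*} [Fintype ι] (X : ι → Euc s) : Set (Euc s) :=
  {z | ∃ u : ι → ℕ, ∑ j, (u j : ℝ) • X j = z}

/-- The lattice `X₁ℤ + ⋯ + X_mℤ` generated by the vectors `X j`. -/
def latOf {s : ℕ} {ι : Type*} [Fintype ι] (X : ι → Euc s) : Set (Euc s) :=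
  {z | ∃ u : ι → ℤ, ∑ j, (u j : ℝ) • X j = z}

/-- The convex cone `X₁ℝ⁺ + ⋯ + X_mℝ⁺` generated by the vectors `X j`. -/
def coneOf {s : ℕ} {ι : Type*} [Fintype ι] (X : ι → Euc s) : Set (Euc s) :=
  {x | ∃ c : ι → ℝ, (∀ j, 0 ≤ c j) ∧ ∑ j, c j • X j = x}

/-- The multiplicity of `z`: the number of finite words `i₁…i_n` with
`X_{i₁} + ⋯ + X_{i_n} = z`. -/
def mult {s : ℕ} {ι : Type*} [Fintype ι] (X : ι → Euc s) (z : Euc s) : ℕ :=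
  Set.ncard {w : List ι | (w.map X).sum = z}

/-- The multiplicity extended to the cone: the minimum of `mult X z` over points
`z` of the semigroup nearest to `x`. -/
def multC {s : ℕ} {ι : Type*} [Fintype ι] (X : ι → Euc s) (x : Euc s) : ℕ :=
  sInf {n | ∃ z ∈ sgOf X, dist x z = Metric.infDist x (sgOf X) ∧ mult X z = n}

/-- All the vectors `X j` have integer coordinates. -/
def IntegralVecs {s : ℕ} {ι : Type*} (X : ι → Euc s) : Prop :=
  ∀ j i, ∃ n : ℤ, X j i = (n : ℝ)

/-- The entropy `h(p) = -∑ p_j log p_j` of a probability vector. -/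
def entropy {m : ℕ} (p : Fin m → ℝ) : ℝ := -∑ j, p j * Real.log (p j)

/-- The `p`-th iteration of `X`: all sums `X_{ω₁} + ⋯ + X_{ω_p}` over words `ω`. -/
def iter {s m : ℕ} (X : Fin m → Euc s) (p : ℕ) : (Fin p → Fin m) → Euc s :=
  fun ω => ∑ i, X (ω i)

private lemma sum_exp_pos' {m : ℕ} (hm : 0 < m) (f : Fin m → ℝ) :
    0 < ∑ j, Real.exp (f j) :=
  Finset.sum_pos (fun j _ => Real.exp_pos _)
    (Finset.univ_nonempty_iff.mpr (Fin.pos_iff_nonempty.mp hm))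

private lemma hasDerivAt_aux {m : ℕ} (hm : 0 < m) (a b : Fin m → ℝ) (cβ c : ℝ) :
    HasDerivAt (fun s : ℝ => Real.log (∑ j, Real.exp (a j + s * b j)) - (cβ + s * c))
      ((∑ j, Real.exp (a j) * b j) / (∑ j, Real.exp (a j)) - c) 0 := by
  have hsum : HasDerivAt (fun s : ℝ => ∑ j, Real.exp (a j + s * b j))
      (∑ j, Real.exp (a j + 0 * b j) * b j) 0 :=
    HasDerivAt.fun_sum fun j _ => ((hasDerivAt_mul_const (b j)).const_add (a j)).exp
  have hne : (∑ j, Real.exp (a j + (0:ℝ) * b j)) ≠ 0 := (sum_exp_pos' hm _).ne'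
  have hlog := hsum.log hne
  have hlin : HasDerivAt (fun s : ℝ => cβ + s * c) c 0 := (hasDerivAt_mul_const c).const_add cβ
  have := hlog.sub hlin
  exact this.congr_deriv (by simp)

private lemma gibbs_term {p q : ℝ} (hp : 0 ≤ p) (hq : 0 < q) :
    p * Real.log q - p * Real.log p ≤ q - p ∧
    (p * Real.log q - p * Real.log p = q - p → p = q) := by
  rcases eq_or_lt_of_le hp with h0 | h0
  · refine ⟨by simp [← h0, hq.le], fun h => ?_⟩
    rw [← h0] at h ⊢
    simp at h
    linarith
  · have hr : 0 < q / p := div_pos hq h0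
    have key : p * Real.log q - p * Real.log p = p * Real.log (q / p) := by
      rw [Real.log_div hq.ne' h0.ne']; ring
    have hqp : p * (q / p - 1) = q - p := by field_simp
    constructor
    · rw [key]
      calc p * Real.log (q / p) ≤ p * (q / p - 1) :=
            mul_le_mul_of_nonneg_left (Real.log_le_sub_one_of_pos hr) hp
        _ = q - p := hqp
    · intro h
      by_contra hne
      have hne1 : q / p ≠ 1 := fun h1 => hne ((div_eq_one_iff_eq h0.ne').mp h1).symm
      have hlt : p * Real.log (q / p) < p * (q / p - 1) :=
        mul_lt_mul_of_pos_left (Real.log_lt_sub_one_of_pos hr hne1) h0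
      rw [key] at h
      rw [hqp] at hlt
      linarith

private lemma key_alg {m : ℕ} (a b : Fin m → ℝ) (c : ℝ)
    (hS1 : ∑ j, Real.exp (a j) * b j = (∑ j, Real.exp (a j)) * c)
    (hS2 : ∑ j, Real.exp (a j + b j) * b j = (∑ j, Real.exp (a j + b j)) * c) (j : Fin m) :
    b j = c := by
  have expand : ∑ i, Real.exp (a i) * ((Real.exp (b i) - Real.exp c) * (b i - c))
      = (∑ i, Real.exp (a i + b i) * b i) - (∑ i, Real.exp (a i + b i)) * c
        - Real.exp c * ((∑ i, Real.exp (a i) * b i) - (∑ i, Real.exp (a i)) * c) := by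
    simp only [Finset.mul_sum, Finset.sum_mul, ← Finset.sum_sub_distrib]
    exact Finset.sum_congr rfl fun i _ => by rw [Real.exp_add]; ring
  have hsum0 : ∑ i, Real.exp (a i) * ((Real.exp (b i) - Real.exp c) * (b i - c)) = 0 := by
    rw [expand, hS1, hS2]; ring
  by_contra hne
  have hnn : ∀ i ∈ Finset.univ,
      0 ≤ Real.exp (a i) * ((Real.exp (b i) - Real.exp c) * (b i - c)) := by
    intro i _
    apply mul_nonneg (Real.exp_pos _).le
    rcases le_total (b i) c with h | h
    · have h1 : Real.exp (b i) - Real.exp c ≤ 0 := by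
        rw [sub_nonpos, Real.exp_le_exp]; exact h
      have h2 : b i - c ≤ 0 := by linarith
      nlinarith
    · have h1 : 0 ≤ Real.exp (b i) - Real.exp c := by
        rw [sub_nonneg, Real.exp_le_exp]; exact h
      have h2 : 0 ≤ b i - c := by linarith
      exact mul_nonneg h1 h2
  have hz := (Finset.sum_eq_zero_iff_of_nonneg hnn).mp hsum0 j (Finset.mem_univ j)
  have hpos : 0 < Real.exp (a j) * ((Real.exp (b j) - Real.exp c) * (b j - c)) := by
    apply mul_pos (Real.exp_pos _)
    rcases lt_or_gt_of_ne hne with h | h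
    · have h1 : Real.exp (b j) - Real.exp c < 0 := by
        rw [sub_neg, Real.exp_lt_exp]; exact h
      have h2 : b j - c < 0 := by linarith
      exact mul_pos_of_neg_of_neg h1 h2
    · have h1 : 0 < Real.exp (b j) - Real.exp c := by
        rw [sub_pos, Real.exp_lt_exp]; exact h
      have h2 : 0 < b j - c := by linarith
      exact mul_pos h1 h2
  linarith

private lemma hull_rep {d m : ℕ} (X : Fin m → Euc d) {x : Euc d}
    (hx : x ∈ convexHull ℝ (Set.range X)) :
    ∃ p : Fin m → ℝ, (∀ j, 0 ≤ p j) ∧ ∑ j, p j = 1 ∧ ∑ j, p j • X j = x := by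
  classical
  rw [convexHull_range_eq_exists_affineCombination] at hx
  obtain ⟨s, w, hw0, hw1, hx⟩ := hx
  refine ⟨fun j => if j ∈ s then w j else 0, fun j => ?_, ?_, ?_⟩
  · dsimp only
    split
    · exact hw0 _ ‹_›
    · exact le_rfl
  · dsimp only
    rw [Finset.sum_ite_mem, Finset.univ_inter, hw1]
  · dsimp only
    rw [← hx, Finset.affineCombination_eq_linear_combination _ _ _ hw1]
    rw [show (∑ j : Fin m, (if j ∈ s then w j else 0) • X j)
        = ∑ j : Fin m, (if j ∈ s then w j • X j else 0) from
      Finset.sum_congr rfl fun j _ => by split <;> simp]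
    rw [Finset.sum_ite_mem, Finset.univ_inter]

/-- Maximum entropy principle: if the differences `X_i - X_j` span `ℝ^d` and `β`
is interior to the convex hull of the `X_j`, then `∇Z(t)/Z(t) = β` has a unique
solution `t_β`; under the constraints `∑ p_j = 1`, `∑ p_j X_j = β` the entropy
attains its maximum exactly at `p*_j = e^{⟨t_β, X_j⟩}/Z(t_β)`, and the maximum
is `log Z(t_β) - ⟨t_β, β⟩`. -/
theorem stmt8 {d m : ℕ} (hm : 2 ≤ m) (X : Fin m → Euc d)
    (hspan : Submodule.span ℝ {v : Euc d | ∃ i j, v = X i - X j} = ⊤)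
    (β : Euc d) (hβ : β ∈ interior (convexHull ℝ (Set.range X))) :
    ∃ t : Euc d,
      ((∑ j, Real.exp ⟪t, X j⟫ • X j) = (∑ j, Real.exp ⟪t, X j⟫) • β) ∧
      (∀ t' : Euc d,
        (∑ j, Real.exp ⟪t', X j⟫ • X j) = (∑ j, Real.exp ⟪t', X j⟫) • β → t' = t) ∧
      (let pstar : Fin m → ℝ := fun j => Real.exp ⟪t, X j⟫ / ∑ i, Real.exp ⟪t, X i⟫
       (∀ j, 0 ≤ pstar j) ∧ (∑ j, pstar j = 1) ∧ (∑ j, pstar j • X j = β) ∧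
       (∀ p : Fin m → ℝ, (∀ j, 0 ≤ p j) → ∑ j, p j = 1 → ∑ j, p j • X j = β →
          entropy p ≤ entropy pstar) ∧
       (∀ p : Fin m → ℝ, (∀ j, 0 ≤ p j) → ∑ j, p j = 1 → ∑ j, p j • X j = β →
          entropy p = entropy pstar → p = pstar) ∧
       entropy pstar = Real.log (∑ j, Real.exp ⟪t, X j⟫) - ⟪t, β⟫) := by
  classical
  have hm0 : 0 < m := by omega
  set Z : Euc d → ℝ := fun t => ∑ j, Real.exp ⟪t, X j⟫ with hZdef
  have hZpos : ∀ t, 0 < Z t := fun t => sum_exp_pos' hm0 _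
  -- orthogonality
  have horth : ∀ v : Euc d, (∀ j, ⟪v, X j⟫ = ⟪v, β⟫) → v = 0 := by
    intro v hv
    have hker : {w : Euc d | ∃ i j, w = X i - X j} ⊆
        (LinearMap.ker (innerSL ℝ v : Euc d →ₗ[ℝ] ℝ) : Set (Euc d)) := by
      rintro w ⟨i, j, rfl⟩
      simp only [SetLike.mem_coe, LinearMap.mem_ker]
      show ⟪v, X i - X j⟫ = 0
      rw [inner_sub_right, hv i, hv j, sub_self]
    have hle : Submodule.span ℝ {w : Euc d | ∃ i j, w = X i - X j} ≤
        LinearMap.ker (innerSL ℝ v : Euc d →ₗ[ℝ] ℝ) := Submodule.span_le.mpr hker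
    rw [hspan] at hle
    have hv0 : ⟪v, v⟫ = (0:ℝ) := hle (Submodule.mem_top)
    exact inner_self_eq_zero.mp hv0
  -- coercivity
  obtain ⟨ε0, hε0, hball⟩ : ∃ ε > 0, Metric.ball β ε ⊆ convexHull ℝ (Set.range X) := by
    rw [mem_interior_iff_mem_nhds, Metric.mem_nhds_iff] at hβ
    exact hβ
  set ε := ε0 / 2 with hεdef
  have hε : 0 < ε := by positivity
  have hcoer : ∀ t : Euc d, ∃ j, ε * ‖t‖ ≤ ⟪t, X j⟫ - ⟪t, β⟫ := by
    intro t
    by_cases ht : t = 0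
    · exact ⟨⟨0, hm0⟩, by simp [ht]⟩
    · have htn : 0 < ‖t‖ := norm_pos_iff.mpr ht
      set u : Euc d := ‖t‖⁻¹ • t with hu
      have hun : ⟪u, u⟫ = (1:ℝ) := by
        rw [real_inner_smul_left, real_inner_smul_right, real_inner_self_eq_norm_sq]
        field_simp
      have hy : β + ε • u ∈ convexHull ℝ (Set.range X) := by
        apply hball
        rw [Metric.mem_ball, dist_eq_norm]
        have hnu : ‖u‖ = 1 := by
          have := hun
          rw [real_inner_self_eq_norm_sq] at this
          nlinarith [norm_nonneg u]
        simp only [add_sub_cancel_left, norm_smul, Real.norm_eq_abs, hnu, mul_one,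
          abs_of_pos hε]
        linarith
      obtain ⟨p, hp0, hp1, hpx⟩ := hull_rep X hy
      -- ε = ∑ p j * ⟪u, X j - β⟫
      have hkey : ∑ j, p j * (⟪u, X j⟫ - ⟪u, β⟫) = ε := by
        have h1 : ⟪u, (β + ε • u) - β⟫ = ε := by
          rw [add_sub_cancel_left, real_inner_smul_right, hun, mul_one]
        rw [← h1, ← hpx]
        rw [inner_sub_right, inner_sum]
        have h2 : ∑ j, ⟪u, p j • X j⟫ - ⟪u, β⟫
            = ∑ j, (p j * ⟪u, X j⟫ - p j * ⟪u, β⟫) := by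
          rw [Finset.sum_sub_distrib]
          congr 1
          · exact Finset.sum_congr rfl fun j _ => real_inner_smul_right _ _ _
          · rw [← Finset.sum_mul, hp1, one_mul]
        rw [h2]
        exact (Finset.sum_congr rfl fun j _ => by ring).symm
      have hex : ∃ j, ε ≤ ⟪u, X j⟫ - ⟪u, β⟫ := by
        by_contra hcon
        push_neg at hcon
        obtain ⟨j0, hj0⟩ : ∃ j0, 0 < p j0 := by
          by_contra hc
          push_neg at hc
          have : ∑ j, p j = 0 := Finset.sum_eq_zero fun j _ => le_antisymm (hc j) (hp0 j)
          rw [hp1] at this; norm_num at this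
        have hlt : ∑ j, p j * (⟪u, X j⟫ - ⟪u, β⟫) < ∑ j, p j * ε := by
          apply Finset.sum_lt_sum
          · intro j _
            rcases eq_or_lt_of_le (hp0 j) with h | h
            · rw [← h]; simp
            · exact mul_le_mul_of_nonneg_left (hcon j).le h.le
          · exact ⟨j0, Finset.mem_univ _, mul_lt_mul_of_pos_left (hcon j0) hj0⟩
        rw [hkey, ← Finset.sum_mul, hp1, one_mul] at hlt
        exact lt_irrefl _ hlt
      obtain ⟨j, hj⟩ := hex
      refine ⟨j, ?_⟩
      have hiw : ∀ w : Euc d, ‖t‖ * ⟪u, w⟫ = ⟪t, w⟫ := by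
        intro w
        rw [hu, real_inner_smul_left]
        rw [← mul_assoc, mul_inv_cancel₀ htn.ne', one_mul]
      calc ε * ‖t‖ = ‖t‖ * ε := mul_comm _ _
        _ ≤ ‖t‖ * (⟪u, X j⟫ - ⟪u, β⟫) := mul_le_mul_of_nonneg_left hj htn.le
        _ = ⟪t, X j⟫ - ⟪t, β⟫ := by rw [mul_sub, hiw, hiw]
  -- the dual function F
  set F : Euc d → ℝ := fun t => Real.log (Z t) - ⟪t, β⟫ with hFdef
  have hFcont : Continuous F := by
    have hZc : Continuous Z := by
      apply continuous_finset_sum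
      intro j _
      exact Real.continuous_exp.comp (continuous_id.inner continuous_const)
    exact (hZc.log fun t => (hZpos t).ne').sub (continuous_id.inner continuous_const)
  have hFlb : ∀ t, ε * ‖t‖ ≤ F t := by
    intro t
    obtain ⟨j, hj⟩ := hcoer t
    have hle : Real.exp ⟪t, X j⟫ ≤ Z t :=
      Finset.single_le_sum (f := fun j => Real.exp ⟪t, X j⟫)
        (fun i _ => (Real.exp_pos _).le) (Finset.mem_univ j)
    have hlog : ⟪t, X j⟫ ≤ Real.log (Z t) := (Real.le_log_iff_exp_le (hZpos t)).mpr hle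
    calc ε * ‖t‖ ≤ ⟪t, X j⟫ - ⟪t, β⟫ := hj
      _ ≤ Real.log (Z t) - ⟪t, β⟫ := by linarith
      _ = F t := rfl
  -- existence of a global minimizer
  set R : ℝ := F 0 / ε + 1 with hRdef
  have hF0 : 0 ≤ F 0 := by simpa using hFlb 0
  have hR : 0 ≤ R := by positivity
  obtain ⟨t₀, ht₀mem, ht₀min⟩ :=
    (isCompact_closedBall (0 : Euc d) R).exists_isMinOn
      ⟨0, Metric.mem_closedBall_self hR⟩ hFcont.continuousOn
  have hglob : ∀ t, F t₀ ≤ F t := by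
    intro t
    by_cases htmem : t ∈ Metric.closedBall (0 : Euc d) R
    · exact ht₀min htmem
    · have htR : R < ‖t‖ := by
        rw [Metric.mem_closedBall, dist_zero_right] at htmem
        linarith [not_le.mp htmem]
      have h1 : F t₀ ≤ F 0 := ht₀min (Metric.mem_closedBall_self hR)
      have h2 : ε * R < ε * ‖t‖ := by nlinarith
      have h3 : F 0 < ε * R := by
        rw [hRdef]
        field_simp
        nlinarith
      linarith [hFlb t]
  -- first-order condition
  have hstat : ∀ v : Euc d,
      ∑ j, Real.exp ⟪t₀, X j⟫ * ⟪v, X j⟫ = Z t₀ * ⟪v, β⟫ := by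
    intro v
    set a : Fin m → ℝ := fun j => ⟪t₀, X j⟫ with ha
    set b : Fin m → ℝ := fun j => ⟪v, X j⟫ with hb
    have hEqf : (fun s : ℝ => F (t₀ + s • v))
        = fun s => Real.log (∑ j, Real.exp (a j + s * b j)) - (⟪t₀, β⟫ + s * ⟪v, β⟫) := by
      funext s
      simp only [hFdef, hZdef, ha, hb]
      congr 2
      · refine Finset.sum_congr rfl fun j _ => ?_
        rw [inner_add_left, real_inner_smul_left]
      · rw [inner_add_left, real_inner_smul_left]
    have hd : HasDerivAt (fun s : ℝ => F (t₀ + s • v))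
        ((∑ j, Real.exp (a j) * b j) / (∑ j, Real.exp (a j)) - ⟪v, β⟫) 0 := by
      rw [hEqf]
      exact hasDerivAt_aux hm0 a b _ _
    have hmin : IsLocalMin (fun s : ℝ => F (t₀ + s • v)) 0 :=
      Filter.Eventually.of_forall fun s => by simpa using hglob (t₀ + s • v)
    have hzero := hmin.hasDerivAt_eq_zero hd
    have hZne : (∑ j, Real.exp (a j)) ≠ 0 := (sum_exp_pos' hm0 a).ne'
    have : (∑ j, Real.exp (a j) * b j) / (∑ j, Real.exp (a j)) = ⟪v, β⟫ := by linarith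
    have h2 := (div_eq_iff hZne).mp this
    rw [h2]
    rw [hZdef]
    ring
  -- the vector equation at t₀
  have heq0 : (∑ j, Real.exp ⟪t₀, X j⟫ • X j) = (∑ j, Real.exp ⟪t₀, X j⟫) • β := by
    set W : Euc d := (∑ j, Real.exp ⟪t₀, X j⟫ • X j) - (∑ j, Real.exp ⟪t₀, X j⟫) • β with hW
    have hvW : ∀ v : Euc d, ⟪v, W⟫ = 0 := by
      intro v
      rw [hW, inner_sub_right, inner_sum, real_inner_smul_right]
      have h1 : ∑ j, ⟪v, Real.exp ⟪t₀, X j⟫ • X j⟫ = ∑ j, Real.exp ⟪t₀, X j⟫ * ⟪v, X j⟫ :=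
        Finset.sum_congr rfl fun j _ => real_inner_smul_right _ _ _
      rw [h1, hstat v]
      rw [hZdef]
      ring
    have : W = 0 := inner_self_eq_zero.mp (hvW W)
    exact sub_eq_zero.mp this
  -- uniqueness
  have huniq : ∀ t' : Euc d,
      (∑ j, Real.exp ⟪t', X j⟫ • X j) = (∑ j, Real.exp ⟪t', X j⟫) • β → t' = t₀ := by
    intro t' heq'
    have hab : ∀ j, ⟪t', X j⟫ = ⟪t₀, X j⟫ + ⟪t' - t₀, X j⟫ := by
      intro j
      rw [inner_sub_left]
      ring
    have hS1 : ∑ j, Real.exp ⟪t₀, X j⟫ * ⟪t' - t₀, X j⟫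
        = (∑ j, Real.exp ⟪t₀, X j⟫) * ⟪t' - t₀, β⟫ := by
      have h := congrArg (fun w : Euc d => (⟪t' - t₀, w⟫ : ℝ)) heq0
      simp only [inner_sum, real_inner_smul_right] at h
      exact h
    have hS2 : ∑ j, Real.exp (⟪t₀, X j⟫ + ⟪t' - t₀, X j⟫) * ⟪t' - t₀, X j⟫
        = (∑ j, Real.exp (⟪t₀, X j⟫ + ⟪t' - t₀, X j⟫)) * ⟪t' - t₀, β⟫ := by
      have h := congrArg (fun w : Euc d => (⟪t' - t₀, w⟫ : ℝ)) heq'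
      simp only [inner_sum, real_inner_smul_right, hab] at h
      exact h
    have hterm := key_alg (fun j => ⟪t₀, X j⟫) (fun j => ⟪t' - t₀, X j⟫) ⟪t' - t₀, β⟫ hS1 hS2
    have hv0 : t' - t₀ = 0 := horth _ hterm
    exact sub_eq_zero.mp hv0
  -- entropy part
  refine ⟨t₀, heq0, huniq, ?_⟩
  intro pstar
  have hZ0 : Z t₀ = ∑ i, Real.exp ⟪t₀, X i⟫ := rfl
  have hZne : (∑ i, Real.exp ⟪t₀, X i⟫) ≠ 0 := (hZpos t₀).ne'
  have hps : ∀ j, pstar j = Real.exp ⟪t₀, X j⟫ / ∑ i, Real.exp ⟪t₀, X i⟫ := fun j => rfl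
  have hpspos : ∀ j, 0 < pstar j := fun j => div_pos (Real.exp_pos _) (hZpos t₀)
  have hps1 : ∑ j, pstar j = 1 := by
    simp only [hps]
    rw [← Finset.sum_div, div_self hZne]
  have hpsX : ∑ j, pstar j • X j = β := by
    have : ∑ j, pstar j • X j
        = (∑ i, Real.exp ⟪t₀, X i⟫)⁻¹ • ∑ j, Real.exp ⟪t₀, X j⟫ • X j := by
      rw [Finset.smul_sum]
      refine Finset.sum_congr rfl fun j _ => ?_
      rw [hps, smul_smul, div_eq_inv_mul]
    rw [this, heq0, smul_smul, inv_mul_cancel₀ hZne, one_smul]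
  have hlogps : ∀ j, Real.log (pstar j) = ⟪t₀, X j⟫ - Real.log (∑ i, Real.exp ⟪t₀, X i⟫) := by
    intro j
    rw [hps, Real.log_div (Real.exp_ne_zero _) hZne, Real.log_exp]
  -- key: cross entropy of any feasible p against pstar
  have hcross : ∀ p : Fin m → ℝ, ∑ j, p j = 1 → ∑ j, p j • X j = β →
      -∑ j, p j * Real.log (pstar j)
        = Real.log (∑ i, Real.exp ⟪t₀, X i⟫) - ⟪t₀, β⟫ := by
    intro p hp1 hpX
    have hinner : ∑ j, p j * ⟪t₀, X j⟫ = ⟪t₀, β⟫ := by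
      rw [← hpX, inner_sum]
      exact Finset.sum_congr rfl fun j _ => (real_inner_smul_right _ _ _).symm
    calc -∑ j, p j * Real.log (pstar j)
        = -∑ j, (p j * ⟪t₀, X j⟫ - p j * Real.log (∑ i, Real.exp ⟪t₀, X i⟫)) := by
          congr 1
          exact Finset.sum_congr rfl fun j _ => by rw [hlogps j]; ring
      _ = (∑ j, p j) * Real.log (∑ i, Real.exp ⟪t₀, X i⟫) - ∑ j, p j * ⟪t₀, X j⟫ := by
          rw [Finset.sum_sub_distrib, Finset.sum_mul]
          ring
      _ = Real.log (∑ i, Real.exp ⟪t₀, X i⟫) - ⟪t₀, β⟫ := by rw [hp1, hinner, one_mul]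
  have hHps : entropy pstar = Real.log (∑ i, Real.exp ⟪t₀, X i⟫) - ⟪t₀, β⟫ := by
    rw [entropy, hcross pstar hps1 hpsX]
  -- Gibbs inequality
  have hgibbs : ∀ p : Fin m → ℝ, (∀ j, 0 ≤ p j) → ∑ j, p j = 1 →
      (entropy p ≤ -∑ j, p j * Real.log (pstar j)) ∧
      (entropy p = -∑ j, p j * Real.log (pstar j) → p = pstar) := by
    intro p hp0 hp1
    have hterm : ∀ j ∈ Finset.univ,
        p j * Real.log (pstar j) - p j * Real.log (p j) ≤ pstar j - p j :=
      fun j _ => (gibbs_term (hp0 j) (hpspos j)).1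
    have hsums : ∑ j, (pstar j - p j) = 0 := by
      rw [Finset.sum_sub_distrib, hps1, hp1, sub_self]
    have hsumle : ∑ j, (p j * Real.log (pstar j) - p j * Real.log (p j)) ≤ 0 := by
      rw [← hsums]
      exact Finset.sum_le_sum hterm
    constructor
    · rw [entropy]
      have : ∑ j, (p j * Real.log (pstar j) - p j * Real.log (p j))
          = ∑ j, p j * Real.log (pstar j) - ∑ j, p j * Real.log (p j) := by
        rw [Finset.sum_sub_distrib]
      linarith [this ▸ hsumle]
    · intro hEq
      have hsumeq : ∑ j, (p j * Real.log (pstar j) - p j * Real.log (p j))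
          = ∑ j, (pstar j - p j) := by
        rw [Finset.sum_sub_distrib, Finset.sum_sub_distrib, hps1, hp1]
        rw [entropy] at hEq
        linarith [hEq]
      have htermeq := (Finset.sum_eq_sum_iff_of_le hterm).mp hsumeq
      funext j
      exact (gibbs_term (hp0 j) (hpspos j)).2 (htermeq j (Finset.mem_univ j))
  refine ⟨fun j => (hpspos j).le, hps1, hpsX, ?_, ?_, hHps⟩
  · intro p hp0 hp1 hpX
    calc entropy p ≤ -∑ j, p j * Real.log (pstar j) := (hgibbs p hp0 hp1).1
      _ = Real.log (∑ i, Real.exp ⟪t₀, X i⟫) - ⟪t₀, β⟫ := hcross p hp1 hpX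
      _ = entropy pstar := hHps.symm
  · intro p hp0 hp1 hpX hE
    apply (hgibbs p hp0 hp1).2
    rw [hE, hHps, hcross p hp1 hpX]
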